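/- Assume (H3) and let Ξ and f̂ be as in the context. Then f̂ : X → X is continuously Fréchet differentiable. -/

import Mathlib

open MeasureTheory Set
set_option maxHeartbeats 2000000

noncomputable section

/-- `ℝ³` with the `ℓ¹` norm. -/
abbrev V3 : Type := PiLp 1 fun _ : Fin 3 => ℝ

/-- The state space `X = L¹([0,ω],ℝ³)` with norm `‖ψ‖₁ = ‖ψ₁‖₁+‖ψ₂‖₁+‖ψ₃‖₁`. -/
abbrev XX (ω : ℝ) := Lp (α := ℝ) V3 1 (volume.restrict (Icc (0:ℝ) ω))

/-- `M` is the essential supremum of `|k|` on `[0,ω]²`. -/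
def IsEssSupSq (ω : ℝ) (k : ℝ → ℝ → ℝ) (M : ℝ) : Prop :=
  (∀ᵐ z ∂((volume.restrict (Icc (0:ℝ) ω)).prod (volume.restrict (Icc (0:ℝ) ω))),
      |k z.1 z.2| ≤ M) ∧
    ∀ C : ℝ,
      (∀ᵐ z ∂((volume.restrict (Icc (0:ℝ) ω)).prod (volume.restrict (Icc (0:ℝ) ω))),
        |k z.1 z.2| ≤ C) → M ≤ C

/-- The force of infection `Λ(a,ζ) = ∫₀^ω k(a,σ)ζ(σ)dσ`. -/
def Lam (ω : ℝ) (k : ℝ → ℝ → ℝ) (ζ : ℝ → ℝ) (a : ℝ) : ℝ :=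
  ∫ σ in Icc (0:ℝ) ω, k a σ * ζ σ

/-- Pointwise values of the nonlinearity `f(ψ)(a) = (−Λ(a,ψ₂)ψ₁(a), Λ(a,ψ₂)ψ₁(a), 0)`. -/
def fval (ω : ℝ) (k : ℝ → ℝ → ℝ) (g : ℝ → V3) (a : ℝ) : Fin 3 → ℝ :=
  ![-(Lam ω k (fun σ => g σ 1) a) * g a 0,
     (Lam ω k (fun σ => g σ 1) a) * g a 0, 0]


/-- Pointwise values of the truncated nonlinearity
`f̂(ψ)(a) = (−Ξ(Λ(a,ψ₂))ψ₁(a), Ξ(Λ(a,ψ₂))ψ₁(a), 0)`. -/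
def fhatval (ω : ℝ) (k : ℝ → ℝ → ℝ) (Ξ : ℝ → ℝ) (g : ℝ → V3) (a : ℝ) : Fin 3 → ℝ :=
  ![-(Ξ (Lam ω k (fun σ => g σ 1) a)) * g a 0,
     (Ξ (Lam ω k (fun σ => g σ 1) a)) * g a 0, 0]

/-! ### Auxiliary material -/

/-- the basic vector `(-x, x, 0)`. -/
def tri (x : ℝ) : V3 := WithLp.toLp 1 ![-x, x, 0]

lemma tri_apply_one (x : ℝ) : tri x 1 = x := rfl

lemma tri_add (x y : ℝ) : tri (x + y) = tri x + tri y := by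
  ext i; fin_cases i <;> simp [tri] <;> ring

lemma tri_sub (x y : ℝ) : tri (x - y) = tri x - tri y := by
  ext i; fin_cases i <;> simp [tri] <;> ring

lemma tri_eq_smul (x : ℝ) : tri x = x • tri 1 := by
  ext i; fin_cases i <;> simp [tri]

lemma norm_tri (x : ℝ) : ‖tri x‖ = 2 * |x| := by
  simp [tri, PiLp.norm_eq_of_L1, Fin.sum_univ_three, Real.norm_eq_abs, abs_neg]
  ring

lemma abs_apply_le_norm (x : V3) (i : Fin 3) : |x i| ≤ ‖x‖ := by
  have h : ‖x‖ = |x 0| + |x 1| + |x 2| := by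
    simp [PiLp.norm_eq_of_L1, Fin.sum_univ_three, Real.norm_eq_abs]
  rw [h]
  fin_cases i
  · show |x 0| ≤ _; nlinarith [abs_nonneg (x 0), abs_nonneg (x 1), abs_nonneg (x 2)]
  · show |x 1| ≤ _; nlinarith [abs_nonneg (x 0), abs_nonneg (x 1), abs_nonneg (x 2)]
  · show |x 2| ≤ _; nlinarith [abs_nonneg (x 0), abs_nonneg (x 1), abs_nonneg (x 2)]

lemma smulRight_one_sub (a b : ℝ) :
    ContinuousLinearMap.smulRight (1 : ℝ →L[ℝ] ℝ) a
      - ContinuousLinearMap.smulRight (1 : ℝ →L[ℝ] ℝ) b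
      = ContinuousLinearMap.smulRight (1 : ℝ →L[ℝ] ℝ) (a - b) := by
  ext; simp [mul_sub]

lemma xi_taylor (Ξ : ℝ → ℝ) (hΞ : Differentiable ℝ Ξ) (u v C : ℝ)
    (hC : ∀ t ∈ Icc (u - |v|) (u + |v|), |deriv Ξ t - deriv Ξ u| ≤ C) :
    |Ξ (u + v) - Ξ u - deriv Ξ u * v| ≤ C * |v| := by
  have h := Convex.norm_image_sub_le_of_norm_fderiv_le'
    (f := Ξ) (s := Icc (u - |v|) (u + |v|))
    (φ := ContinuousLinearMap.smulRight (1 : ℝ →L[ℝ] ℝ) (deriv Ξ u)) (C := C)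
    (fun x _ => hΞ x) ?_ (convex_Icc _ _) ?_ ?_ (x := u) (y := u + v)
  · simpa [Real.norm_eq_abs, add_sub_cancel_left, mul_comm] using h
  · intro t ht
    have h2 : fderiv ℝ Ξ t = ContinuousLinearMap.smulRight (1 : ℝ →L[ℝ] ℝ) (deriv Ξ t) :=
      ((hΞ t).hasDerivAt.hasFDerivAt).fderiv
    rw [h2, smulRight_one_sub]
    calc ‖ContinuousLinearMap.smulRight (1 : ℝ →L[ℝ] ℝ) (deriv Ξ t - deriv Ξ u)‖
        = ‖(1 : ℝ →L[ℝ] ℝ)‖ * ‖deriv Ξ t - deriv Ξ u‖ :=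
          ContinuousLinearMap.norm_smulRight_apply _ _
      _ ≤ C := by simpa [Real.norm_eq_abs, norm_one] using hC t ht
  · constructor <;> [linarith [abs_nonneg v]; linarith [abs_nonneg v]]
  · constructor <;> [linarith [neg_abs_le v]; linarith [le_abs_self v]]

instance fin_mu (ω : ℝ) : IsFiniteMeasure (volume.restrict (Icc (0:ℝ) ω)) := by
  constructor
  rw [Measure.restrict_apply_univ, Real.volume_Icc]
  exact ENNReal.ofReal_lt_top

section LamLemmas
variable (ω : ℝ) (k : ℝ → ℝ → ℝ) (Mk : ℝ)

lemma lam_congr {ζ η : ℝ → ℝ} (h : ζ =ᵐ[volume.restrict (Icc (0:ℝ) ω)] η) :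
    Lam ω k ζ = Lam ω k η := by
  funext a
  exact integral_congr_ae (h.mono fun σ hσ => by simp only [hσ])

lemma lam_aesm (hk : Measurable (Function.uncurry k)) {ζ : ℝ → ℝ}
    (hζ : AEStronglyMeasurable ζ (volume.restrict (Icc (0:ℝ) ω))) :
    AEStronglyMeasurable (Lam ω k ζ) (volume.restrict (Icc (0:ℝ) ω)) := by
  apply MeasureTheory.AEStronglyMeasurable.integral_prod_right'
    (f := fun z : ℝ × ℝ => k z.1 z.2 * ζ z.2)
  exact (hk.aestronglyMeasurable).mul
    (hζ.comp_quasiMeasurePreserving Measure.quasiMeasurePreserving_snd)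

lemma Mk_nonneg (hω : 0 < ω)
    (hMk : ∀ᵐ z ∂((volume.restrict (Icc (0:ℝ) ω)).prod (volume.restrict (Icc (0:ℝ) ω))),
       |k z.1 z.2| ≤ Mk) : 0 ≤ Mk := by
  have hne : ((volume.restrict (Icc (0:ℝ) ω)).prod (volume.restrict (Icc (0:ℝ) ω))) ≠ 0 := by
    intro h
    have h2 := congrArg (fun m : Measure (ℝ × ℝ) => m univ) h
    simp only [Measure.coe_zero, Pi.zero_apply] at h2
    rw [← univ_prod_univ, Measure.prod_prod, Measure.restrict_apply_univ, Real.volume_Icc,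
      sub_zero] at h2
    rcases mul_eq_zero.mp h2 with h3 | h3 <;>
      · rw [ENNReal.ofReal_eq_zero] at h3; linarith
  have hx : ∃ z : ℝ × ℝ, |k z.1 z.2| ≤ Mk := by
    have : (ae ((volume.restrict (Icc (0:ℝ) ω)).prod (volume.restrict (Icc (0:ℝ) ω)))).NeBot :=
      ae_neBot.mpr hne
    exact hMk.exists
  obtain ⟨z, hz⟩ := hx
  exact le_trans (abs_nonneg _) hz

lemma lam_facts (hk : Measurable (Function.uncurry k))
    (hMk : ∀ᵐ z ∂((volume.restrict (Icc (0:ℝ) ω)).prod (volume.restrict (Icc (0:ℝ) ω))),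
       |k z.1 z.2| ≤ Mk)
    {ζ : ℝ → ℝ} (hζ : Integrable ζ (volume.restrict (Icc (0:ℝ) ω))) :
    ∀ᵐ a ∂(volume.restrict (Icc (0:ℝ) ω)),
      Integrable (fun σ => k a σ * ζ σ) (volume.restrict (Icc (0:ℝ) ω)) ∧
      |Lam ω k ζ a| ≤ Mk * ∫ σ in Icc (0:ℝ) ω, |ζ σ| := by
  have h1 : ∀ᵐ a ∂(volume.restrict (Icc (0:ℝ) ω)),
      ∀ᵐ σ ∂(volume.restrict (Icc (0:ℝ) ω)), |k a σ| ≤ Mk :=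
    Measure.ae_ae_of_ae_prod hMk
  filter_upwards [h1] with a ha
  have hka : Measurable (k a) := hk.comp (measurable_prodMk_left)
  have hasm : AEStronglyMeasurable (fun σ => k a σ * ζ σ) (volume.restrict (Icc (0:ℝ) ω)) :=
    (hka.aestronglyMeasurable).mul hζ.1
  have hint : Integrable (fun σ => k a σ * ζ σ) (volume.restrict (Icc (0:ℝ) ω)) := by
    apply Integrable.mono' (g := fun σ => Mk * |ζ σ|) (hζ.abs.const_mul Mk) hasm
    filter_upwards [ha] with σ hσ
    rw [Real.norm_eq_abs, abs_mul]
    exact mul_le_mul_of_nonneg_right hσ (abs_nonneg _)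
  refine ⟨hint, ?_⟩
  calc |Lam ω k ζ a| ≤ ∫ σ in Icc (0:ℝ) ω, |k a σ * ζ σ| := by
        simpa only [Lam, Real.norm_eq_abs] using
          norm_integral_le_integral_norm (μ := volume.restrict (Icc (0:ℝ) ω))
            (fun σ => k a σ * ζ σ)
    _ ≤ ∫ σ in Icc (0:ℝ) ω, Mk * |ζ σ| := by
        apply integral_mono_ae hint.abs (hζ.abs.const_mul Mk)
        filter_upwards [ha] with σ hσ
        rw [abs_mul]
        exact mul_le_mul_of_nonneg_right hσ (abs_nonneg _)
    _ = Mk * ∫ σ in Icc (0:ℝ) ω, |ζ σ| := integral_const_mul _ _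

lemma lam_smul (r : ℝ) (ζ : ℝ → ℝ) (a : ℝ) :
    Lam ω k (fun σ => r * ζ σ) a = r * Lam ω k ζ a := by
  unfold Lam
  rw [← integral_const_mul]
  congr 1; funext σ; ring

lemma lam_add' {ζ η : ℝ → ℝ} {a : ℝ}
    (h1 : Integrable (fun σ => k a σ * ζ σ) (volume.restrict (Icc (0:ℝ) ω)))
    (h2 : Integrable (fun σ => k a σ * η σ) (volume.restrict (Icc (0:ℝ) ω))) :
    Lam ω k (fun σ => ζ σ + η σ) a = Lam ω k ζ a + Lam ω k η a := by
  unfold Lam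
  rw [← integral_add h1 h2]
  congr 1; funext σ; ring

end LamLemmas


lemma scalar_est (Ξ : ℝ → ℝ) (u v p q C ε₁ : ℝ)
    (hlip2 : ∀ x y : ℝ, |Ξ x - Ξ y| ≤ 2 * |x - y|)
    (htay : |Ξ (u + v) - Ξ u - deriv Ξ u * v| ≤ ε₁ * |v|)
    (hv : |v| ≤ C) (hε₁ : 0 ≤ ε₁) :
    |Ξ (u + v) * (p + q) - Ξ u * p - (deriv Ξ u * v * p + Ξ u * q)|
      ≤ ε₁ * C * |p| + 2 * C * |q| := by
  have h1 : Ξ (u + v) * (p + q) - Ξ u * p - (deriv Ξ u * v * p + Ξ u * q)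
      = (Ξ (u + v) - Ξ u - deriv Ξ u * v) * p + (Ξ (u + v) - Ξ u) * q := by ring
  rw [h1]
  have hB : |Ξ (u + v) - Ξ u| ≤ 2 * |v| := by simpa using hlip2 (u + v) u
  have hv0 : (0:ℝ) ≤ |v| := abs_nonneg v
  calc |(Ξ (u + v) - Ξ u - deriv Ξ u * v) * p + (Ξ (u + v) - Ξ u) * q|
      ≤ |(Ξ (u + v) - Ξ u - deriv Ξ u * v) * p| + |(Ξ (u + v) - Ξ u) * q| := abs_add_le _ _
    _ = |Ξ (u + v) - Ξ u - deriv Ξ u * v| * |p| + |Ξ (u + v) - Ξ u| * |q| := by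
        rw [abs_mul, abs_mul]
    _ ≤ (ε₁ * C) * |p| + (2 * C) * |q| := by
        have b1 : |Ξ (u + v) - Ξ u - deriv Ξ u * v| ≤ ε₁ * C := htay.trans (by nlinarith)
        have b2 : |Ξ (u + v) - Ξ u| ≤ 2 * C := hB.trans (by nlinarith)
        nlinarith [abs_nonneg p, abs_nonneg q,
          mul_le_mul_of_nonneg_right b1 (abs_nonneg p),
          mul_le_mul_of_nonneg_right b2 (abs_nonneg q)]
    _ = ε₁ * C * |p| + 2 * C * |q| := by ring

lemma scalar_est2 (Ξ : ℝ → ℝ) (u w v p q r C1 C2 ε₁ : ℝ)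
    (hd1 : |deriv Ξ (u + w)| ≤ 2)
    (hdd : |deriv Ξ (u + w) - deriv Ξ u| ≤ ε₁)
    (hXi : |Ξ (u + w) - Ξ u| ≤ 2 * |w|)
    (hv : |v| ≤ C1) (hw : |w| ≤ C2) :
    |(deriv Ξ (u + w) * v * (p + r) + Ξ (u + w) * q) - (deriv Ξ u * v * p + Ξ u * q)|
      ≤ 2 * C1 * |r| + ε₁ * C1 * |p| + 2 * C2 * |q| := by
  have h1 : (deriv Ξ (u + w) * v * (p + r) + Ξ (u + w) * q) - (deriv Ξ u * v * p + Ξ u * q)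
      = deriv Ξ (u + w) * v * r + (deriv Ξ (u + w) - deriv Ξ u) * v * p
        + (Ξ (u + w) - Ξ u) * q := by ring
  rw [h1]
  have hv0 : (0:ℝ) ≤ |v| := abs_nonneg v
  have hC1 : (0:ℝ) ≤ C1 := hv0.trans hv
  calc |deriv Ξ (u + w) * v * r + (deriv Ξ (u + w) - deriv Ξ u) * v * p
        + (Ξ (u + w) - Ξ u) * q|
      ≤ |deriv Ξ (u + w) * v * r| + |(deriv Ξ (u + w) - deriv Ξ u) * v * p|
        + |(Ξ (u + w) - Ξ u) * q| := abs_add_three _ _ _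
    _ = |deriv Ξ (u + w)| * |v| * |r| + |deriv Ξ (u + w) - deriv Ξ u| * |v| * |p|
        + |Ξ (u + w) - Ξ u| * |q| := by rw [abs_mul, abs_mul, abs_mul, abs_mul, abs_mul]
    _ ≤ 2 * C1 * |r| + ε₁ * C1 * |p| + 2 * C2 * |q| := by
        have hε₁0 : (0:ℝ) ≤ ε₁ := (abs_nonneg _).trans hdd
        have b1 : |deriv Ξ (u + w)| * |v| ≤ 2 * C1 := by nlinarith [abs_nonneg (deriv Ξ (u+w))]
        have b2 : |deriv Ξ (u + w) - deriv Ξ u| * |v| ≤ ε₁ * C1 := by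
          nlinarith [abs_nonneg (deriv Ξ (u + w) - deriv Ξ u)]
        have b3 : |Ξ (u + w) - Ξ u| ≤ 2 * C2 := hXi.trans (by nlinarith [abs_nonneg w])
        nlinarith [abs_nonneg p, abs_nonneg q, abs_nonneg r,
          mul_le_mul_of_nonneg_right b1 (abs_nonneg r),
          mul_le_mul_of_nonneg_right b2 (abs_nonneg p),
          mul_le_mul_of_nonneg_right b3 (abs_nonneg q)]


/-- pointwise value of the derivative candidate -/
def dfun (ω : ℝ) (k : ℝ → ℝ → ℝ) (Ξ : ℝ → ℝ) (g h : ℝ → V3) (a : ℝ) : ℝ :=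
  deriv Ξ (Lam ω k (fun σ => g σ 1) a) * Lam ω k (fun σ => h σ 1) a * g a 0
    + Ξ (Lam ω k (fun σ => g σ 1) a) * h a 0

theorem fhat_contDiff (ω : ℝ) (hω : 0 < ω)
    (k : ℝ → ℝ → ℝ) (Mk : ℝ)
    (hkmeas : Measurable (Function.uncurry k)) (hMk : IsEssSupSq ω k Mk)
    (hkpos : ∀ᵐ z ∂((volume.restrict (Icc (0:ℝ) ω)).prod (volume.restrict (Icc (0:ℝ) ω))),
      0 ≤ k z.1 z.2)
    (c : ℝ) (hc : 0 < c)
    (Ξ : ℝ → ℝ) (hΞdiff : Differentiable ℝ Ξ) (hΞderiv : Continuous (deriv Ξ))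
    (hΞbdd : ∀ z : ℝ, |Ξ z| ≤ c)
    (hΞ' : ∀ z : ℝ, 0 ≤ deriv Ξ z ∧ deriv Ξ z ≤ 2)
    (F : XX ω → XX ω)
    (hF : ∀ ψ : XX ω, ∀ᵐ a ∂(volume.restrict (Icc (0:ℝ) ω)),
      ∀ i : Fin 3, (F ψ) a i = fhatval ω k Ξ (⇑ψ) a i) :
    ContDiff ℝ 1 F := by
  set μ := volume.restrict (Icc (0:ℝ) ω) with hμ
  have hMk0 : 0 ≤ Mk := Mk_nonneg ω k Mk hω hMk.1
  -- component integrability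
  have h_int : ∀ (ψ : XX ω) (i : Fin 3), Integrable (fun a => ψ a i) μ := by
    intro ψ i
    exact (PiLp.proj 1 (fun _ : Fin 3 => ℝ) i : V3 →L[ℝ] ℝ).integrable_comp
      (L1.integrable_coeFn ψ)
  -- component L¹-norm bound
  have h_cle : ∀ (ψ : XX ω) (i : Fin 3), (∫ a, |ψ a i| ∂μ) ≤ ‖ψ‖ := by
    intro ψ i
    rw [L1.norm_eq_integral_norm]
    exact integral_mono ((h_int ψ i).abs) (L1.integrable_coeFn ψ).norm
      (fun a => abs_apply_le_norm (ψ a) i)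
  -- Lipschitz bound for Ξ
  have hlip : ∀ x y : ℝ, |Ξ x - Ξ y| ≤ 2 * |x - y| := by
    have h2 : ∀ x : ℝ, ‖deriv Ξ x‖₊ ≤ (2 : NNReal) := by
      intro x
      rw [← NNReal.coe_le_coe, coe_nnnorm, Real.norm_eq_abs]
      exact abs_le.2 ⟨by push_cast; linarith [(hΞ' x).1], by push_cast; exact (hΞ' x).2⟩
    have lip := lipschitzWith_of_nnnorm_deriv_le hΞdiff h2
    intro x y
    have h3 := lip.dist_le_mul x y
    rw [Real.dist_eq, Real.dist_eq] at h3
    simpa using h3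
  -- a.e. splitting of Lam over sums
  have lam_split : ∀ (φ χ : XX ω), ∀ᵐ a ∂μ,
      Lam ω k (fun σ => (φ + χ) σ 1) a
        = Lam ω k (fun σ => φ σ 1) a + Lam ω k (fun σ => χ σ 1) a := by
    intro φ χ
    have e1 : Lam ω k (fun σ => (φ + χ) σ 1) = Lam ω k (fun σ => φ σ 1 + χ σ 1) := by
      apply lam_congr
      filter_upwards [Lp.coeFn_add φ χ] with σ hσ
      rw [hσ]; rfl
    filter_upwards [lam_facts ω k Mk hkmeas hMk.1 (h_int φ 1),
      lam_facts ω k Mk hkmeas hMk.1 (h_int χ 1)] with a h1 h2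
    rw [e1]
    exact lam_add' ω k h1.1 h2.1
  -- a.e. bound for Lam
  have lam_bd : ∀ (φ : XX ω), ∀ᵐ a ∂μ,
      |Lam ω k (fun σ => φ σ 1) a| ≤ Mk * ‖φ‖ := by
    intro φ
    filter_upwards [lam_facts ω k Mk hkmeas hMk.1 (h_int φ 1)] with a ha
    exact ha.2.trans (mul_le_mul_of_nonneg_left (h_cle φ 1) hMk0)
  -- Lam of scalar multiple
  have lam_smul_split : ∀ (r : ℝ) (χ : XX ω),
      Lam ω k (fun σ => (r • χ) σ 1) = fun a => r * Lam ω k (fun σ => χ σ 1) a := by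
    intro r χ
    have e1 : Lam ω k (fun σ => (r • χ) σ 1) = Lam ω k (fun σ => r * χ σ 1) := by
      apply lam_congr
      filter_upwards [Lp.coeFn_smul r χ] with σ hσ
      rw [hσ]; rfl
    rw [e1]
    funext a
    exact lam_smul ω k r _ a
  -- F in tri form
  have hFtri : ∀ ψ : XX ω, ⇑(F ψ) =ᵐ[μ]
      fun a => tri (Ξ (Lam ω k (fun σ => ψ σ 1) a) * ψ a 0) := by
    intro ψ
    filter_upwards [hF ψ] with a ha
    ext i
    rw [ha i]
    fin_cases i <;> simp [fhatval, tri]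
  -- key norm identity
  have key : ∀ (G : XX ω) (s : ℝ → ℝ), (⇑G =ᵐ[μ] fun a => tri (s a)) →
      Integrable s μ ∧ ‖G‖ = 2 * ∫ a, |s a| ∂μ := by
    intro G s hGs
    have hs : (fun a => s a) =ᵐ[μ] fun a => G a 1 := by
      filter_upwards [hGs] with a ha
      rw [ha, tri_apply_one]
    have hint : Integrable s μ := (h_int G 1).congr hs.symm
    refine ⟨hint, ?_⟩
    rw [L1.norm_eq_integral_norm]
    have e2 : ∫ a, ‖G a‖ ∂μ = ∫ a, 2 * |s a| ∂μ :=
      integral_congr_ae (hGs.mono fun a ha => by simp only [ha, norm_tri])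
    rw [e2, integral_const_mul]
  -- integrability and integral bound for the derivative integrand
  have dall : ∀ (ψ h : XX ω), Integrable (dfun ω k Ξ (⇑ψ) (⇑h)) μ ∧
      (∫ a, |dfun ω k Ξ (⇑ψ) (⇑h) a| ∂μ) ≤ (2 * Mk * ‖ψ‖ + c) * ‖h‖ := by
    intro ψ h
    have hu : AEStronglyMeasurable (Lam ω k (fun σ => ψ σ 1)) μ :=
      lam_aesm ω k hkmeas (h_int ψ 1).1
    have hv : AEStronglyMeasurable (Lam ω k (fun σ => h σ 1)) μ :=
      lam_aesm ω k hkmeas (h_int h 1).1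
    have hd : AEStronglyMeasurable (dfun ω k Ξ (⇑ψ) (⇑h)) μ := by
      apply AEStronglyMeasurable.add
      · exact ((hΞderiv.comp_aestronglyMeasurable hu).mul hv).mul (h_int ψ 0).1
      · exact ((hΞdiff.continuous.comp_aestronglyMeasurable hu)).mul (h_int h 0).1
    have hbd : ∀ᵐ a ∂μ, |dfun ω k Ξ (⇑ψ) (⇑h) a|
        ≤ 2 * (Mk * ‖h‖) * |ψ a 0| + c * |h a 0| := by
      filter_upwards [lam_bd h] with a ha
      have e1 : |deriv Ξ (Lam ω k (fun σ => ψ σ 1) a) * Lam ω k (fun σ => h σ 1) a * ψ a 0|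
          ≤ 2 * (Mk * ‖h‖) * |ψ a 0| := by
        rw [abs_mul, abs_mul]
        have hd2 : |deriv Ξ (Lam ω k (fun σ => ψ σ 1) a)| ≤ 2 :=
          abs_le.2 ⟨by linarith [(hΞ' (Lam ω k (fun σ => ψ σ 1) a)).1], (hΞ' _).2⟩
        have hva : 0 ≤ |Lam ω k (fun σ => h σ 1) a| := abs_nonneg _
        calc |deriv Ξ (Lam ω k (fun σ => ψ σ 1) a)| * |Lam ω k (fun σ => h σ 1) a| * |ψ a 0|
            ≤ 2 * |Lam ω k (fun σ => h σ 1) a| * |ψ a 0| :=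
              mul_le_mul_of_nonneg_right (mul_le_mul_of_nonneg_right hd2 hva) (abs_nonneg _)
          _ ≤ 2 * (Mk * ‖h‖) * |ψ a 0| := by
              have h2 : 2 * |Lam ω k (fun σ => h σ 1) a| ≤ 2 * (Mk * ‖h‖) := by linarith
              exact mul_le_mul_of_nonneg_right h2 (abs_nonneg _)
      have e2 : |Ξ (Lam ω k (fun σ => ψ σ 1) a) * h a 0| ≤ c * |h a 0| := by
        rw [abs_mul]
        exact mul_le_mul_of_nonneg_right (hΞbdd _) (abs_nonneg _)
      calc |dfun ω k Ξ (⇑ψ) (⇑h) a| ≤ _ + _ := abs_add_le _ _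
        _ ≤ 2 * (Mk * ‖h‖) * |ψ a 0| + c * |h a 0| := add_le_add e1 e2
    have hbint : Integrable (fun a => 2 * (Mk * ‖h‖) * |ψ a 0| + c * |h a 0|) μ :=
      ((h_int ψ 0).abs.const_mul _).add ((h_int h 0).abs.const_mul c)
    have hdint : Integrable (dfun ω k Ξ (⇑ψ) (⇑h)) μ := by
      apply Integrable.mono' hbint hd
      filter_upwards [hbd] with a ha
      rwa [Real.norm_eq_abs]
    refine ⟨hdint, ?_⟩
    calc (∫ a, |dfun ω k Ξ (⇑ψ) (⇑h) a| ∂μ)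
        ≤ ∫ a, (2 * (Mk * ‖h‖) * |ψ a 0| + c * |h a 0|) ∂μ :=
          integral_mono_ae hdint.abs hbint hbd
      _ = 2 * (Mk * ‖h‖) * (∫ a, |ψ a 0| ∂μ) + c * ∫ a, |h a 0| ∂μ := by
          rw [integral_add ((h_int ψ 0).abs.const_mul _) ((h_int h 0).abs.const_mul c),
            integral_const_mul, integral_const_mul]
      _ ≤ 2 * (Mk * ‖h‖) * ‖ψ‖ + c * ‖h‖ := by
          have g1 := h_cle ψ 0
          have g2 := h_cle h 0
          have hnn : (0:ℝ) ≤ 2 * (Mk * ‖h‖) := by positivity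
          nlinarith [mul_le_mul_of_nonneg_left g1 hnn,
            mul_le_mul_of_nonneg_left g2 (le_of_lt hc)]
      _ ≤ (2 * Mk * ‖ψ‖ + c) * ‖h‖ := by nlinarith [norm_nonneg ψ, norm_nonneg h, hMk0]
  have dmem : ∀ (ψ h : XX ω), MemLp (fun a => tri (dfun ω k Ξ (⇑ψ) (⇑h) a)) 1 μ := by
    intro ψ h
    rw [memLp_one_iff_integrable]
    have e1 : (fun a => tri (dfun ω k Ξ (⇑ψ) (⇑h) a))
        = fun a => (dfun ω k Ξ (⇑ψ) (⇑h) a) • tri 1 := by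
      funext a; rw [tri_eq_smul]
    rw [e1]
    exact (dall ψ h).1.smul_const (tri 1)
  -- the candidate derivative
  have hDex : ∃ D : XX ω → XX ω →L[ℝ] XX ω, ∀ ψ h : XX ω,
      ⇑(D ψ h) =ᵐ[μ] fun a => tri (dfun ω k Ξ (⇑ψ) (⇑h) a) := by
    refine ⟨fun ψ => LinearMap.mkContinuous
      { toFun := fun h => (dmem ψ h).toLp _
        map_add' := ?_
        map_smul' := ?_ } (2 * (2 * Mk * ‖ψ‖ + c)) ?_, ?_⟩
    · intro h h'
      apply Lp.ext
      filter_upwards [(dmem ψ (h + h')).coeFn_toLp, (dmem ψ h).coeFn_toLp,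
        (dmem ψ h').coeFn_toLp,
        Lp.coeFn_add ((dmem ψ h).toLp _) ((dmem ψ h').toLp _),
        lam_split h h', Lp.coeFn_add h h'] with a e0 e1 e2 e3 hs hadd
      rw [e0, e3]
      simp only [Pi.add_apply]
      rw [e1, e2]
      have h0 : (h + h') a 0 = h a 0 + h' a 0 := by rw [hadd]; rfl
      have e4 : dfun ω k Ξ (⇑ψ) (⇑(h + h')) a
          = dfun ω k Ξ (⇑ψ) (⇑h) a + dfun ω k Ξ (⇑ψ) (⇑h') a := by
        unfold dfun
        rw [hs, h0]; ring
      simp only [e4, tri_add]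
    · intro r h
      apply Lp.ext
      filter_upwards [(dmem ψ (r • h)).coeFn_toLp, (dmem ψ h).coeFn_toLp,
        Lp.coeFn_smul r ((dmem ψ h).toLp _), Lp.coeFn_smul r h] with a e0 e1 e2 hsm
      rw [RingHom.id_apply, e0, e2]
      simp only [Pi.smul_apply]
      rw [e1]
      have h0 : (r • h) a 0 = r * h a 0 := by
        rw [hsm]; rfl
      have e4 : dfun ω k Ξ (⇑ψ) (⇑(r • h)) a = r * dfun ω k Ξ (⇑ψ) (⇑h) a := by
        unfold dfun
        rw [congrFun (lam_smul_split r h) a, h0]; ring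
      rw [e4, tri_eq_smul, tri_eq_smul (dfun ω k Ξ (⇑ψ) (⇑h) a), smul_smul]
    · intro h
      obtain ⟨hint, hnorm⟩ := key _ _ (dmem ψ h).coeFn_toLp
      simp only [LinearMap.coe_mk, AddHom.coe_mk]
      rw [hnorm]
      calc 2 * ∫ a, |dfun ω k Ξ (⇑ψ) (⇑h) a| ∂μ
          ≤ 2 * ((2 * Mk * ‖ψ‖ + c) * ‖h‖) := by linarith [(dall ψ h).2]
        _ = 2 * (2 * Mk * ‖ψ‖ + c) * ‖h‖ := by ring
    · intro ψ h
      exact (dmem ψ h).coeFn_toLp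
  obtain ⟨D, hD⟩ := hDex
  have int_bd3 : ∀ (r : ℝ → ℝ) (p q t : ℝ) (ψ1 ψ2 ψ3 : XX ω), 0 ≤ p → 0 ≤ q → 0 ≤ t →
      Integrable r μ →
      (∀ᵐ a ∂μ, |r a| ≤ p * |ψ1 a 0| + q * |ψ2 a 0| + t * |ψ3 a 0|) →
      (∫ a, |r a| ∂μ) ≤ p * ‖ψ1‖ + q * ‖ψ2‖ + t * ‖ψ3‖ := by
    intro r p q t ψ1 ψ2 ψ3 hp hq ht hr hae
    have hbint : Integrable (fun a => p * |ψ1 a 0| + q * |ψ2 a 0| + t * |ψ3 a 0|) μ :=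
      (((h_int ψ1 0).abs.const_mul p).add ((h_int ψ2 0).abs.const_mul q)).add
        ((h_int ψ3 0).abs.const_mul t)
    calc (∫ a, |r a| ∂μ) ≤ ∫ a, (p * |ψ1 a 0| + q * |ψ2 a 0| + t * |ψ3 a 0|) ∂μ :=
          integral_mono_ae hr.abs hbint hae
      _ = p * (∫ a, |ψ1 a 0| ∂μ) + q * (∫ a, |ψ2 a 0| ∂μ) + t * ∫ a, |ψ3 a 0| ∂μ := by
          have i12 : Integrable (fun a => p * |ψ1 a 0| + q * |ψ2 a 0|) μ :=
            ((h_int ψ1 0).abs.const_mul p).add ((h_int ψ2 0).abs.const_mul q)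
          rw [integral_add i12 ((h_int ψ3 0).abs.const_mul t),
            integral_add ((h_int ψ1 0).abs.const_mul p) ((h_int ψ2 0).abs.const_mul q),
            integral_const_mul, integral_const_mul, integral_const_mul]
      _ ≤ p * ‖ψ1‖ + q * ‖ψ2‖ + t * ‖ψ3‖ := by
          nlinarith [mul_le_mul_of_nonneg_left (h_cle ψ1 0) hp,
            mul_le_mul_of_nonneg_left (h_cle ψ2 0) hq,
            mul_le_mul_of_nonneg_left (h_cle ψ3 0) ht]
  -- differentiability
  have hasF : ∀ ψ : XX ω, HasFDerivAt F (D ψ) ψ := by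
    intro ψ
    rw [hasFDerivAt_iff_isLittleO_nhds_zero, Asymptotics.isLittleO_iff]
    intro ε hε
    have hR1 : 0 < Mk * ‖ψ‖ + 1 := by nlinarith [norm_nonneg ψ, hMk0]
    set ε₁ := ε / (4 * (Mk * ‖ψ‖ + 1)) with hε₁def
    have hε₁ : 0 < ε₁ := div_pos hε (by linarith)
    have heq : ε₁ * (4 * (Mk * ‖ψ‖ + 1)) = ε := div_mul_cancel₀ ε (by linarith)
    have huc := (isCompact_Icc (a := -(Mk * ‖ψ‖ + 1))
      (b := Mk * ‖ψ‖ + 1)).uniformContinuousOn_of_continuous hΞderiv.continuousOn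
    rw [Metric.uniformContinuousOn_iff] at huc
    obtain ⟨δ, hδ0, hδ⟩ := huc ε₁ hε₁
    have hD0 : 0 < min δ (min 1 (ε / 8)) / (Mk + 1) :=
      div_pos (lt_min hδ0 (lt_min one_pos (by linarith))) (by linarith)
    rw [Metric.eventually_nhds_iff]
    refine ⟨min δ (min 1 (ε / 8)) / (Mk + 1), hD0, ?_⟩
    intro h hdist
    rw [dist_zero_right] at hdist
    have hMkh : Mk * ‖h‖ < min δ (min 1 (ε / 8)) := by
      have h1 : ‖h‖ * (Mk + 1) < min δ (min 1 (ε / 8)) := (lt_div_iff₀ (by linarith)).1 hdist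
      nlinarith [norm_nonneg h]
    have hMkh0 : 0 ≤ Mk * ‖h‖ := by positivity
    have hvδ : Mk * ‖h‖ < δ := lt_of_lt_of_le hMkh (min_le_left _ _)
    have hv1 : Mk * ‖h‖ ≤ 1 :=
      le_of_lt (lt_of_lt_of_le hMkh ((min_le_right _ _).trans (min_le_left _ _)))
    have hvε : Mk * ‖h‖ ≤ ε / 8 :=
      le_of_lt (lt_of_lt_of_le hMkh ((min_le_right _ _).trans (min_le_right _ _)))
    have hGae : ⇑(F (ψ + h) - F ψ - D ψ h) =ᵐ[μ] fun a =>
        tri (Ξ (Lam ω k (fun σ => ψ σ 1) a + Lam ω k (fun σ => h σ 1) a)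
            * (ψ a 0 + h a 0)
          - Ξ (Lam ω k (fun σ => ψ σ 1) a) * ψ a 0
          - dfun ω k Ξ (⇑ψ) (⇑h) a) := by
      filter_upwards [Lp.coeFn_sub (F (ψ + h) - F ψ) (D ψ h),
        Lp.coeFn_sub (F (ψ + h)) (F ψ), hFtri (ψ + h), hFtri ψ, hD ψ h,
        lam_split ψ h, Lp.coeFn_add ψ h] with a e1 e2 f1 f2 d1 ls ca
      rw [e1]
      simp only [Pi.sub_apply]
      rw [e2]
      simp only [Pi.sub_apply]
      rw [f1, f2, d1]
      have hca0 : (ψ + h) a 0 = ψ a 0 + h a 0 := by rw [ca]; rfl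
      rw [ls, hca0, ← tri_sub, ← tri_sub]
    obtain ⟨hrint, hrnorm⟩ := key _ _ hGae
    rw [hrnorm]
    have hae : ∀ᵐ a ∂μ, |Ξ (Lam ω k (fun σ => ψ σ 1) a + Lam ω k (fun σ => h σ 1) a)
            * (ψ a 0 + h a 0)
          - Ξ (Lam ω k (fun σ => ψ σ 1) a) * ψ a 0
          - dfun ω k Ξ (⇑ψ) (⇑h) a|
        ≤ (ε₁ * (Mk * ‖h‖)) * |ψ a 0| + (2 * (Mk * ‖h‖)) * |h a 0| + 0 * |ψ a 0| := by
      filter_upwards [lam_bd ψ, lam_bd h] with a hua hva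
      have taylor : |Ξ (Lam ω k (fun σ => ψ σ 1) a + Lam ω k (fun σ => h σ 1) a)
            - Ξ (Lam ω k (fun σ => ψ σ 1) a)
            - deriv Ξ (Lam ω k (fun σ => ψ σ 1) a) * Lam ω k (fun σ => h σ 1) a|
          ≤ ε₁ * |Lam ω k (fun σ => h σ 1) a| := by
        apply xi_taylor Ξ hΞdiff
        intro t ht
        obtain ⟨ht1, ht2⟩ := ht
        obtain ⟨hu1, hu2⟩ := abs_le.1 hua
        obtain ⟨hv1', hv2'⟩ := abs_le.1 hva
        have hvabs : |Lam ω k (fun σ => h σ 1) a| ≤ Mk * ‖h‖ := hva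
        have htK : t ∈ Icc (-(Mk * ‖ψ‖ + 1)) (Mk * ‖ψ‖ + 1) := by
          constructor <;> nlinarith [abs_nonneg (Lam ω k (fun σ => h σ 1) a)]
        have huK : Lam ω k (fun σ => ψ σ 1) a ∈ Icc (-(Mk * ‖ψ‖ + 1)) (Mk * ‖ψ‖ + 1) := by
          constructor <;> nlinarith
        have hdist2 : dist t (Lam ω k (fun σ => ψ σ 1) a) < δ := by
          rw [Real.dist_eq]
          have : |t - Lam ω k (fun σ => ψ σ 1) a| ≤ |Lam ω k (fun σ => h σ 1) a| :=
            abs_le.2 ⟨by linarith, by linarith⟩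
          linarith
        have := hδ t htK _ huK hdist2
        rw [Real.dist_eq] at this
        exact le_of_lt this
      have hest := scalar_est Ξ (Lam ω k (fun σ => ψ σ 1) a) (Lam ω k (fun σ => h σ 1) a)
        (ψ a 0) (h a 0) (Mk * ‖h‖) ε₁ hlip taylor hva (le_of_lt hε₁)
      simp only [dfun]
      calc |Ξ (Lam ω k (fun σ => ψ σ 1) a + Lam ω k (fun σ => h σ 1) a) * (ψ a 0 + h a 0)
            - Ξ (Lam ω k (fun σ => ψ σ 1) a) * ψ a 0
            - (deriv Ξ (Lam ω k (fun σ => ψ σ 1) a) * Lam ω k (fun σ => h σ 1) a * ψ a 0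
              + Ξ (Lam ω k (fun σ => ψ σ 1) a) * h a 0)|
          ≤ ε₁ * (Mk * ‖h‖) * |ψ a 0| + 2 * (Mk * ‖h‖) * |h a 0| := hest
        _ ≤ (ε₁ * (Mk * ‖h‖)) * |ψ a 0| + (2 * (Mk * ‖h‖)) * |h a 0| + 0 * |ψ a 0| := by
            linarith
    have hibd := int_bd3 _ (ε₁ * (Mk * ‖h‖)) (2 * (Mk * ‖h‖)) 0 ψ h ψ
      (by positivity) (by positivity) le_rfl hrint hae
    have key1 : ε₁ * (Mk * ‖ψ‖) ≤ ε / 4 := by nlinarith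
    have key2 := mul_le_mul_of_nonneg_right key1 (norm_nonneg h)
    have key3 := mul_le_mul_of_nonneg_right hvε (norm_nonneg h)
    nlinarith [norm_nonneg h, norm_nonneg ψ]
  -- continuity of the derivative
  have contD : Continuous D := by
    rw [continuous_iff_continuousAt]
    intro φ
    rw [Metric.continuousAt_iff]
    intro ε hε
    have hR1 : 0 < Mk * ‖φ‖ + 1 := by nlinarith [norm_nonneg φ, hMk0]
    set ε₁ := ε / (8 * (Mk * ‖φ‖ + 1)) with hε₁def
    have hε₁ : 0 < ε₁ := div_pos hε (by linarith)
    have heq : ε₁ * (8 * (Mk * ‖φ‖ + 1)) = ε := div_mul_cancel₀ ε (by linarith)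
    have huc := (isCompact_Icc (a := -(Mk * ‖φ‖ + 1))
      (b := Mk * ‖φ‖ + 1)).uniformContinuousOn_of_continuous hΞderiv.continuousOn
    rw [Metric.uniformContinuousOn_iff] at huc
    obtain ⟨δ, hδ0, hδ⟩ := huc ε₁ hε₁
    refine ⟨min δ (min 1 (ε / 32)) / (Mk + 1),
      div_pos (lt_min hδ0 (lt_min one_pos (by linarith))) (by linarith), ?_⟩
    intro ψ hdist
    obtain ⟨χ, rfl⟩ : ∃ χ, ψ = φ + χ := ⟨ψ - φ, by abel⟩
    rw [dist_eq_norm, add_sub_cancel_left] at hdist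
    rw [dist_eq_norm]
    have hMkχ : Mk * ‖χ‖ < min δ (min 1 (ε / 32)) := by
      have h1 : ‖χ‖ * (Mk + 1) < min δ (min 1 (ε / 32)) := (lt_div_iff₀ (by linarith)).1 hdist
      nlinarith [norm_nonneg χ]
    have hχδ : Mk * ‖χ‖ < δ := lt_of_lt_of_le hMkχ (min_le_left _ _)
    have hχ1 : Mk * ‖χ‖ ≤ 1 :=
      le_of_lt (lt_of_lt_of_le hMkχ ((min_le_right _ _).trans (min_le_left _ _)))
    have hχε : Mk * ‖χ‖ ≤ ε / 32 :=
      le_of_lt (lt_of_lt_of_le hMkχ ((min_le_right _ _).trans (min_le_right _ _)))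
    have hMkχ0 : 0 ≤ Mk * ‖χ‖ := by positivity
    have hop : ‖D (φ + χ) - D φ‖ ≤ ε / 2 := by
      apply ContinuousLinearMap.opNorm_le_bound _ (by linarith)
      intro h
      rw [ContinuousLinearMap.sub_apply]
      have hGae : ⇑(D (φ + χ) h - D φ h) =ᵐ[μ] fun a =>
          tri (dfun ω k Ξ (⇑(φ + χ)) (⇑h) a - dfun ω k Ξ (⇑φ) (⇑h) a) := by
        filter_upwards [Lp.coeFn_sub (D (φ + χ) h) (D φ h), hD (φ + χ) h, hD φ h]
          with a e1 e2 e3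
        rw [e1]
        simp only [Pi.sub_apply]
        rw [e2, e3, ← tri_sub]
      obtain ⟨hrint, hrnorm⟩ := key _ _ hGae
      rw [hrnorm]
      have hae : ∀ᵐ a ∂μ, |dfun ω k Ξ (⇑(φ + χ)) (⇑h) a - dfun ω k Ξ (⇑φ) (⇑h) a|
          ≤ (ε₁ * (Mk * ‖h‖)) * |φ a 0| + (2 * (Mk * ‖χ‖)) * |h a 0|
            + (2 * (Mk * ‖h‖)) * |χ a 0| := by
        filter_upwards [lam_bd φ, lam_bd h, lam_bd χ, lam_split φ χ,
          Lp.coeFn_add φ χ] with a hua hva hwa ls ca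
        have hca0 : (φ + χ) a 0 = φ a 0 + χ a 0 := by rw [ca]; rfl
        have e5 : dfun ω k Ξ (⇑(φ + χ)) (⇑h) a
            = deriv Ξ (Lam ω k (fun σ => φ σ 1) a + Lam ω k (fun σ => χ σ 1) a)
                * Lam ω k (fun σ => h σ 1) a * (φ a 0 + χ a 0)
              + Ξ (Lam ω k (fun σ => φ σ 1) a + Lam ω k (fun σ => χ σ 1) a) * h a 0 := by
          simp only [dfun]
          rw [ls, hca0]
        rw [e5]
        have hd1 : |deriv Ξ (Lam ω k (fun σ => φ σ 1) a + Lam ω k (fun σ => χ σ 1) a)| ≤ 2 :=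
          abs_le.2 ⟨by linarith [(hΞ' (Lam ω k (fun σ => φ σ 1) a
            + Lam ω k (fun σ => χ σ 1) a)).1], (hΞ' _).2⟩
        have hdd : |deriv Ξ (Lam ω k (fun σ => φ σ 1) a + Lam ω k (fun σ => χ σ 1) a)
            - deriv Ξ (Lam ω k (fun σ => φ σ 1) a)| ≤ ε₁ := by
          obtain ⟨hu1, hu2⟩ := abs_le.1 hua
          obtain ⟨hw1, hw2⟩ := abs_le.1 hwa
          have htK : Lam ω k (fun σ => φ σ 1) a + Lam ω k (fun σ => χ σ 1) a
              ∈ Icc (-(Mk * ‖φ‖ + 1)) (Mk * ‖φ‖ + 1) := by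
            constructor <;> nlinarith
          have huK : Lam ω k (fun σ => φ σ 1) a
              ∈ Icc (-(Mk * ‖φ‖ + 1)) (Mk * ‖φ‖ + 1) := by
            constructor <;> nlinarith
          have hdist2 : dist (Lam ω k (fun σ => φ σ 1) a + Lam ω k (fun σ => χ σ 1) a)
              (Lam ω k (fun σ => φ σ 1) a) < δ := by
            rw [Real.dist_eq, add_sub_cancel_left]
            linarith [abs_le.2 ⟨hw1, hw2⟩]
          have h6 := hδ _ htK _ huK hdist2
          rw [Real.dist_eq] at h6
          exact le_of_lt h6
        have hXi : |Ξ (Lam ω k (fun σ => φ σ 1) a + Lam ω k (fun σ => χ σ 1) a)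
            - Ξ (Lam ω k (fun σ => φ σ 1) a)| ≤ 2 * |Lam ω k (fun σ => χ σ 1) a| := by
          simpa using hlip (Lam ω k (fun σ => φ σ 1) a + Lam ω k (fun σ => χ σ 1) a)
            (Lam ω k (fun σ => φ σ 1) a)
        have hest := scalar_est2 Ξ (Lam ω k (fun σ => φ σ 1) a)
          (Lam ω k (fun σ => χ σ 1) a) (Lam ω k (fun σ => h σ 1) a)
          (φ a 0) (h a 0) (χ a 0) (Mk * ‖h‖) (Mk * ‖χ‖) ε₁ hd1 hdd hXi hva hwa
        simp only [dfun]
        linarith [hest]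
      have hibd := int_bd3 _ (ε₁ * (Mk * ‖h‖)) (2 * (Mk * ‖χ‖)) (2 * (Mk * ‖h‖)) φ h χ
        (by positivity) (by positivity) (by positivity) hrint hae
      have key1 : ε₁ * (Mk * ‖φ‖) ≤ ε / 8 := by nlinarith
      have key2 := mul_le_mul_of_nonneg_right key1 (norm_nonneg h)
      have key3 := mul_le_mul_of_nonneg_right hχε (norm_nonneg h)
      have key4 : Mk * ‖h‖ * ‖χ‖ = Mk * ‖χ‖ * ‖h‖ := by ring
      nlinarith [norm_nonneg h, norm_nonneg φ, norm_nonneg χ]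
    exact lt_of_le_of_lt hop (by linarith)
  rw [contDiff_one_iff_fderiv]
  refine ⟨fun ψ => (hasF ψ).differentiableAt, ?_⟩
  have : fderiv ℝ F = D := funext fun ψ => (hasF ψ).fderiv
  rw [this]
  exact contD

end
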